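/- Let I be a finite index set and C a finite set; for each i ∈ I let S_i ⊆ C. Let k ≥ 1 be an integer and let p_i ∈ [0,1] for i ∈ I. On a probability space, let (X_i)_{i∈I} be independent random variables taking values in {0,1} with P(X_i = 1) = p_i, and write U = ⋃_{i : X_i = 1} S_i. Assume (H1) ∑_{i∈I} p_i · min(|S_i|, k) ≥ 6k, and (H2) for every e ∈ C, ∑_{i : e ∈ S_i} p_i ≤ 1/6. Let Z = (1/k)·∑_{i∈I} X_i · min(|S_i|, k) and let K be the event {|U| ≤ k − 1}. If P(K) > 0, then P(Z < 2 | K) ≥ 2/5. -/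

import Mathlib

open MeasureTheory ProbabilityTheory Finset

section auxlemmas

variable {I : Type*} [Fintype I]

/-- Product weight of a Boolean configuration. -/
def wgt (p : I → ℝ) (f : I → Bool) : ℝ := ∏ i, if f i then p i else 1 - p i

lemma wgt_nonneg {p : I → ℝ} (hp : ∀ i, 0 ≤ p i ∧ p i ≤ 1) (f : I → Bool) : 0 ≤ wgt p f :=
  Finset.prod_nonneg fun i _ => by rcases hp i with ⟨h0, h1⟩; split <;> linarith

variable [DecidableEq I]

lemma wgt_update (p : I → ℝ) (f : I → Bool) (j : I) (b : Bool) :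
    wgt p (Function.update f j b) = (if b then p j else 1 - p j) *
      ∏ i ∈ Finset.univ.erase j, (if f i then p i else 1 - p i) := by
  unfold wgt
  have h : (fun i => if Function.update f j b i then p i else 1 - p i)
       = Function.update (fun i => if f i then p i else 1 - p i) j (if b then p j else 1 - p j) := by
    funext i; by_cases h : i = j <;> simp [Function.update, h]
  rw [h, Finset.prod_update_of_mem (Finset.mem_univ j), ← Finset.erase_eq]

lemma wgt_eq_erase (p : I → ℝ) (f : I → Bool) (j : I) :
    wgt p f = (if f j then p j else 1 - p j) *
      ∏ i ∈ Finset.univ.erase j, (if f i then p i else 1 - p i) :=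
  (Finset.mul_prod_erase _ _ (Finset.mem_univ j)).symm

lemma flip_sum (p : I → ℝ) (j : I) (P : (I → Bool) → Prop) [DecidablePred P]
    (hP : ∀ f b, P (Function.update f j b) ↔ P f) :
    p j * ∑ f ∈ univ.filter (fun f => P f ∧ f j = false), wgt p f
      = (1 - p j) * ∑ f ∈ univ.filter (fun f => P f ∧ f j = true), wgt p f := by
  rw [Finset.mul_sum, Finset.mul_sum]
  refine Finset.sum_nbij' (fun f => Function.update f j true)
    (fun f => Function.update f j false) ?_ ?_ ?_ ?_ ?_
  · intro f hf
    simp only [Finset.mem_filter, Finset.mem_univ, true_and] at hf ⊢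
    exact ⟨(hP f true).2 hf.1, Function.update_self _ _ _⟩
  · intro f hf
    simp only [Finset.mem_filter, Finset.mem_univ, true_and] at hf ⊢
    exact ⟨(hP f false).2 hf.1, Function.update_self _ _ _⟩
  · intro f hf
    simp only [Finset.mem_filter, Finset.mem_univ, true_and] at hf
    rw [Function.update_idem, ← hf.2, Function.update_eq_self]
  · intro f hf
    simp only [Finset.mem_filter, Finset.mem_univ, true_and] at hf
    rw [Function.update_idem, ← hf.2, Function.update_eq_self]
  · intro f hf
    simp only [Finset.mem_filter, Finset.mem_univ, true_and] at hf
    rw [wgt_update, wgt_eq_erase p f j, hf.2]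
    simp; ring

lemma sum_split (p : I → ℝ) (j : I) (P : (I → Bool) → Prop) [DecidablePred P] :
    ∑ f ∈ univ.filter P, wgt p f
      = ∑ f ∈ univ.filter (fun f => P f ∧ f j = false), wgt p f
        + ∑ f ∈ univ.filter (fun f => P f ∧ f j = true), wgt p f := by
  rw [← Finset.sum_filter_add_sum_filter_not (univ.filter P) (fun f => f j = false)]
  congr 1 <;> rw [Finset.filter_filter] <;> apply Finset.sum_congr _ (fun _ _ => rfl) <;>
    apply Finset.filter_congr <;> intro f _ <;> simp

lemma flip_sum' (p : I → ℝ) (j : I) (P : (I → Bool) → Prop) [DecidablePred P]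
    (hP : ∀ f b, P (Function.update f j b) ↔ P f) :
    ∑ f ∈ univ.filter (fun f => P f ∧ f j = false), wgt p f
      = (1 - p j) * ∑ f ∈ univ.filter P, wgt p f := by
  have h1 := flip_sum p j P hP
  have h2 := sum_split p j P
  set A := ∑ f ∈ univ.filter (fun f => P f ∧ f j = false), wgt p f
  set B := ∑ f ∈ univ.filter (fun f => P f ∧ f j = true), wgt p f
  rw [h2]; ring_nf; linarith [h1]

lemma false_block (p : I → ℝ) (F : Finset I) (P : (I → Bool) → Prop) [DecidablePred P]
    (hP : ∀ j ∈ F, ∀ f b, P (Function.update f j b) ↔ P f) :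
    ∑ f ∈ univ.filter (fun f => P f ∧ ∀ j ∈ F, f j = false), wgt p f
      = (∏ j ∈ F, (1 - p j)) * ∑ f ∈ univ.filter P, wgt p f := by
  classical
  induction F using Finset.induction_on with
  | empty => simp
  | @insert j F hj IH =>
    have hstep : ∑ f ∈ univ.filter (fun f => P f ∧ ∀ l ∈ insert j F, f l = false), wgt p f
        = ∑ f ∈ univ.filter
            (fun f => (fun g => P g ∧ ∀ l ∈ F, g l = false) f ∧ f j = false), wgt p f := by
      apply Finset.sum_congr _ (fun _ _ => rfl)
      apply Finset.filter_congr; intro f _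
      simp only [Finset.forall_mem_insert]; tauto
    rw [hstep, flip_sum' p j _ ?_, IH ?_, Finset.prod_insert hj]
    · ring
    · exact fun l hl => hP l (Finset.mem_insert_of_mem hl)
    · intro f b
      constructor
      · rintro ⟨h1, h2⟩
        refine ⟨(hP j (Finset.mem_insert_self j F) f b).1 h1, fun l hl => ?_⟩
        have hne : l ≠ j := fun h => hj (h ▸ hl)
        have := h2 l hl
        rwa [Function.update_of_ne hne] at this
      · rintro ⟨h1, h2⟩
        refine ⟨(hP j (Finset.mem_insert_self j F) f b).2 h1, fun l hl => ?_⟩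
        have hne : l ≠ j := fun h => hj (h ▸ hl)
        rw [Function.update_of_ne hne]; exact h2 l hl

lemma one_sub_sum_le_prod (F : Finset I) (p : I → ℝ) (h0 : ∀ i, 0 ≤ p i ∧ p i ≤ 1) :
    1 - ∑ j ∈ F, p j ≤ ∏ j ∈ F, (1 - p j) := by
  classical
  induction F using Finset.induction_on with
  | empty => simp
  | @insert j F hj IH =>
    rw [Finset.prod_insert hj, Finset.sum_insert hj]
    have hs : 0 ≤ ∑ l ∈ F, p l := Finset.sum_nonneg fun l _ => (h0 l).1
    nlinarith [(h0 j).1, (h0 j).2, IH]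

end auxlemmas

section core

variable {I : Type*} [Fintype I] [DecidableEq I] {C : Type*} [Fintype C] [DecidableEq C]

/-- The covered set of a Boolean configuration. -/
def UfS (S : I → Finset C) (f : I → Bool) : Finset C :=
  Finset.univ.biUnion fun i => if f i then S i else ∅

lemma mem_UfS {S : I → Finset C} {f : I → Bool} {e : C} :
    e ∈ UfS S f ↔ ∃ i, f i = true ∧ e ∈ S i := by
  simp only [UfS, Finset.mem_biUnion, Finset.mem_univ, true_and]
  constructor
  · rintro ⟨i, hi⟩
    by_cases h : f i = true
    · exact ⟨i, h, by rwa [if_pos h] at hi⟩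
    · rw [if_neg h] at hi; exact absurd hi (Finset.notMem_empty e)
  · rintro ⟨i, h1, h2⟩; exact ⟨i, by rwa [if_pos h1]⟩

lemma UfS_eq (S : I → Finset C) (f : I → Bool) :
    UfS S f = (univ.filter fun i => f i = true).biUnion S := by
  ext x; rw [mem_UfS]; simp

lemma sel_update_sdiff (f : I → Bool) {E : Finset I} {j : I} (hj : j ∈ E) (b : Bool) :
    (univ.filter fun i => Function.update f j b i = true) \ E
      = (univ.filter fun i => f i = true) \ E := by
  ext l
  simp only [Finset.mem_sdiff, Finset.mem_filter, Finset.mem_univ, true_and]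
  constructor
  · rintro ⟨h1, h2⟩
    have hne : l ≠ j := fun h => h2 (h ▸ hj)
    rw [Function.update_of_ne hne] at h1; exact ⟨h1, h2⟩
  · rintro ⟨h1, h2⟩
    have hne : l ≠ j := fun h => h2 (h ▸ hj)
    rw [Function.update_of_ne hne]; exact ⟨h1, h2⟩

lemma step4 (S : I → Finset C) (k : ℕ) (p : I → ℝ)
    (hp01 : ∀ i, 0 ≤ p i ∧ p i ≤ 1) (e : C)
    (hH2e : ∑ i ∈ univ.filter (fun i => e ∈ S i), p i ≤ 1 / 6) :
    ∑ i ∈ univ.filter (fun i => e ∈ S i),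
      ∑ f ∈ univ.filter (fun f : I → Bool => (UfS S f).card ≤ k - 1 ∧ f i = true), wgt p f
    ≤ 6 / 5 * ∑ f ∈ univ.filter (fun f : I → Bool =>
        (UfS S f).card ≤ k - 1 ∧ e ∈ UfS S f), wgt p f := by
  classical
  set E : Finset I := univ.filter (fun i => e ∈ S i) with hE
  set φ : I → (I → Bool) → Prop := fun i f =>
    ((((univ.filter fun l => f l = true) \ E).biUnion S ∪ S i).card ≤ k - 1) with hφ
  set Di : I → Finset (I → Bool) := fun i => univ.filter (fun f => φ i f ∧ f i = true) with hDi
  set Gi : I → Finset (I → Bool) := fun i =>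
    univ.filter (fun f => (φ i f ∧ f i = true) ∧ ∀ j ∈ E.erase i, f j = false) with hGi
  have hw0 : ∀ f, 0 ≤ wgt p f := wgt_nonneg hp01
  have h4a : ∀ i ∈ E, (univ.filter (fun f : I → Bool => (UfS S f).card ≤ k - 1 ∧ f i = true))
      ⊆ Di i := by
    intro i hi f hf
    rw [Finset.mem_filter] at hf
    obtain ⟨-, hcard, hfi⟩ := hf
    rw [hDi, Finset.mem_filter]
    refine ⟨Finset.mem_univ _, ?_, hfi⟩
    rw [hφ]
    refine le_trans (Finset.card_le_card ?_) hcard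
    rw [UfS_eq]
    refine Finset.union_subset (Finset.biUnion_subset_biUnion_of_subset_left _
      Finset.sdiff_subset) ?_
    intro x hx
    exact Finset.mem_biUnion.2 ⟨i, Finset.mem_filter.2 ⟨Finset.mem_univ _, hfi⟩, hx⟩
  have h4b : ∀ i ∈ E, ∑ f ∈ Gi i, wgt p f
      = (∏ j ∈ E.erase i, (1 - p j)) * ∑ f ∈ Di i, wgt p f := by
    intro i hi
    rw [hGi, hDi]
    refine false_block p (E.erase i) _ ?_
    intro j hj f b
    have hjE : j ∈ E := Finset.mem_of_mem_erase hj
    have hji : j ≠ i := Finset.ne_of_mem_erase hj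
    have hupd : φ i (Function.update f j b) ↔ φ i f := by
      rw [hφ]; simp only []
      rw [sel_update_sdiff f hjE b]
    rw [hupd, Function.update_of_ne (Ne.symm hji)]
  have h4c : ∀ i ∈ E, ∑ f ∈ Di i, wgt p f ≤ 6 / 5 * ∑ f ∈ Gi i, wgt p f := by
    intro i hi
    have hsum : ∑ j ∈ E.erase i, p j ≤ 1 / 6 :=
      le_trans (Finset.sum_le_sum_of_subset_of_nonneg (Finset.erase_subset _ _)
        (fun j _ _ => (hp01 j).1)) hH2e
    have hprod : (5 : ℝ) / 6 ≤ ∏ j ∈ E.erase i, (1 - p j) := by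
      have := one_sub_sum_le_prod (E.erase i) p hp01
      linarith
    have hDi0 : 0 ≤ ∑ f ∈ Di i, wgt p f := Finset.sum_nonneg fun f _ => hw0 f
    rw [h4b i hi]
    nlinarith
  have h4d : ∀ i ∈ E, Gi i ⊆ univ.filter (fun f : I → Bool =>
      (UfS S f).card ≤ k - 1 ∧ e ∈ UfS S f) := by
    intro i hi g hg
    rw [hGi, Finset.mem_filter] at hg
    obtain ⟨-, ⟨hφg, hgi⟩, hfalse⟩ := hg
    have heS : e ∈ S i := by
      have := Finset.mem_filter.1 (hE ▸ hi); exact this.2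
    have hsub : UfS S g ⊆ ((univ.filter fun l => g l = true) \ E).biUnion S ∪ S i := by
      intro x hx
      obtain ⟨l, hl, hxl⟩ := mem_UfS.1 hx
      by_cases hlE : l ∈ E
      · have hli : l = i := by
          by_contra hne
          have : l ∈ E.erase i := Finset.mem_erase.2 ⟨hne, hlE⟩
          rw [hfalse l this] at hl; exact absurd hl (by simp)
        exact Finset.mem_union_right _ (hli ▸ hxl)
      · refine Finset.mem_union_left _ (Finset.mem_biUnion.2 ⟨l, ?_, hxl⟩)
        exact Finset.mem_sdiff.2 ⟨Finset.mem_filter.2 ⟨Finset.mem_univ _, hl⟩, hlE⟩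
    refine Finset.mem_filter.2 ⟨Finset.mem_univ _, le_trans (Finset.card_le_card hsub) hφg, ?_⟩
    exact mem_UfS.2 ⟨i, hgi, heS⟩
  have h4e : ∑ i ∈ E, ∑ f ∈ Gi i, wgt p f
      ≤ ∑ f ∈ univ.filter (fun f : I → Bool =>
          (UfS S f).card ≤ k - 1 ∧ e ∈ UfS S f), wgt p f := by
    have hdisj : (E : Set I).PairwiseDisjoint Gi := by
      intro i hi i' hi' hne
      simp only [Function.onFun]
      rw [Finset.disjoint_left]
      intro g hg hg'
      rw [hGi, Finset.mem_filter] at hg hg'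
      have h1 : g i = true := hg.2.1.2
      have h2 : g i = false := hg'.2.2 i (Finset.mem_erase.2 ⟨hne, hi⟩)
      rw [h1] at h2; exact Bool.noConfusion h2
    rw [← Finset.sum_biUnion hdisj]
    exact Finset.sum_le_sum_of_subset_of_nonneg (Finset.biUnion_subset.2 h4d)
      (fun f _ _ => hw0 f)
  calc ∑ i ∈ E, ∑ f ∈ univ.filter
        (fun f : I → Bool => (UfS S f).card ≤ k - 1 ∧ f i = true), wgt p f
      ≤ ∑ i ∈ E, ∑ f ∈ Di i, wgt p f :=
        Finset.sum_le_sum fun i hi =>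
          Finset.sum_le_sum_of_subset_of_nonneg (h4a i hi) (fun f _ _ => hw0 f)
    _ ≤ ∑ i ∈ E, 6 / 5 * ∑ f ∈ Gi i, wgt p f := Finset.sum_le_sum h4c
    _ = 6 / 5 * ∑ i ∈ E, ∑ f ∈ Gi i, wgt p f := by rw [Finset.mul_sum]
    _ ≤ _ := by nlinarith [h4e]

lemma core_bound (S : I → Finset C) (k : ℕ) (hk : 1 ≤ k) (p : I → ℝ)
    (hp01 : ∀ i, 0 ≤ p i ∧ p i ≤ 1)
    (hH2 : ∀ e : C, ∑ i ∈ univ.filter (fun i => e ∈ S i), p i ≤ 1 / 6) :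
    ∑ f ∈ univ.filter (fun f : I → Bool => (UfS S f).card ≤ k - 1 ∧
        (2 * k : ℝ) ≤ ∑ i, (if f i then ((min (S i).card k : ℕ) : ℝ) else 0)), wgt p f
      ≤ 3 / 5 * ∑ f ∈ univ.filter (fun f : I → Bool => (UfS S f).card ≤ k - 1), wgt p f := by
  classical
  have hw0 : ∀ f, 0 ≤ wgt p f := wgt_nonneg hp01
  set T : (I → Bool) → ℝ := fun f => ∑ i, if f i then ((min (S i).card k : ℕ) : ℝ) else 0
    with hT
  have hT0 : ∀ f, 0 ≤ T f := fun f => Finset.sum_nonneg fun i _ => by positivity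
  set KF : Finset (I → Bool) := univ.filter (fun f => (UfS S f).card ≤ k - 1) with hKF
  set LF : Finset (I → Bool) := univ.filter (fun f : I → Bool => (UfS S f).card ≤ k - 1 ∧
      (2 * k : ℝ) ≤ T f) with hLF
  have hQ0 : 0 ≤ ∑ f ∈ KF, wgt p f := Finset.sum_nonneg fun f _ => hw0 f
  have hLK : LF ⊆ KF := by
    intro f hf
    rw [hLF, Finset.mem_filter] at hf
    exact Finset.mem_filter.2 ⟨hf.1, hf.2.1⟩
  have hM : 2 * (k : ℝ) * ∑ f ∈ LF, wgt p f ≤ ∑ f ∈ KF, T f * wgt p f := by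
    rw [Finset.mul_sum]
    refine le_trans (Finset.sum_le_sum ?_) (Finset.sum_le_sum_of_subset_of_nonneg hLK ?_)
    · intro f hf
      exact mul_le_mul_of_nonneg_right ((Finset.mem_filter.1 hf).2.2) (hw0 f)
    · intro f _ _
      exact mul_nonneg (hT0 f) (hw0 f)
  have key : ∀ f : I → Bool, (UfS S f).card ≤ k - 1 →
      T f * wgt p f = ∑ e : C, ∑ i ∈ univ.filter (fun i => e ∈ S i),
        (if f i then wgt p f else 0) := by
    intro f hf
    have hTf : T f = ∑ e : C, ∑ i ∈ univ.filter (fun i => e ∈ S i),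
        (if f i then (1 : ℝ) else 0) := by
      rw [hT]
      have h1 : ∀ i : I, (if f i then ((min (S i).card k : ℕ) : ℝ) else 0)
          = ∑ e : C, (if e ∈ S i then (if f i then (1 : ℝ) else 0) else 0) := by
        intro i
        by_cases h : f i = true
        · simp only [h, if_true]
          have hsub : S i ⊆ UfS S f := fun x hx => mem_UfS.2 ⟨i, h, hx⟩
          have hlt : (S i).card < k := by
            have := Finset.card_le_card hsub
            omega
          rw [min_eq_left hlt.le]
          rw [Finset.sum_boole, Finset.filter_univ_mem]
        · simp [h]
      simp only [h1]
      rw [Finset.sum_comm]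
      refine Finset.sum_congr rfl fun e _ => ?_
      rw [Finset.sum_filter]
    rw [hTf, Finset.sum_mul]
    refine Finset.sum_congr rfl fun e _ => ?_
    rw [Finset.sum_mul]
    refine Finset.sum_congr rfl fun i _ => ?_
    split <;> simp
  have hre : ∑ f ∈ KF, T f * wgt p f
      = ∑ e : C, ∑ i ∈ univ.filter (fun i => e ∈ S i),
          ∑ f ∈ univ.filter (fun f : I → Bool => (UfS S f).card ≤ k - 1 ∧ f i = true),
            wgt p f := by
    rw [Finset.sum_congr rfl (fun f hf => key f (Finset.mem_filter.1 hf).2)]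
    rw [Finset.sum_comm]
    refine Finset.sum_congr rfl fun e _ => ?_
    rw [Finset.sum_comm]
    refine Finset.sum_congr rfl fun i _ => ?_
    rw [← Finset.sum_filter, Finset.filter_filter]
  have h4 : ∑ e : C, ∑ i ∈ univ.filter (fun i => e ∈ S i),
        ∑ f ∈ univ.filter (fun f : I → Bool => (UfS S f).card ≤ k - 1 ∧ f i = true), wgt p f
      ≤ 6 / 5 * ∑ e : C, ∑ f ∈ univ.filter (fun f : I → Bool =>
          (UfS S f).card ≤ k - 1 ∧ e ∈ UfS S f), wgt p f := by
    rw [Finset.mul_sum]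
    exact Finset.sum_le_sum fun e _ => step4 S k p hp01 e (hH2 e)
  have h5 : ∑ e : C, ∑ f ∈ univ.filter (fun f : I → Bool =>
        (UfS S f).card ≤ k - 1 ∧ e ∈ UfS S f), wgt p f
      ≤ (k : ℝ) * ∑ f ∈ KF, wgt p f := by
    have h51 : ∀ e : C, ∑ f ∈ univ.filter (fun f : I → Bool =>
          (UfS S f).card ≤ k - 1 ∧ e ∈ UfS S f), wgt p f
        = ∑ f ∈ KF, (if e ∈ UfS S f then wgt p f else 0) := by
      intro e
      rw [← Finset.sum_filter, Finset.filter_filter]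
    simp only [h51]
    rw [Finset.sum_comm, Finset.mul_sum]
    refine Finset.sum_le_sum fun f hf => ?_
    have hcard : ((UfS S f).card : ℝ) ≤ (k : ℝ) := by
      have h1 : (UfS S f).card ≤ k - 1 := (Finset.mem_filter.1 hf).2
      exact_mod_cast Nat.cast_le.2 (by omega : (UfS S f).card ≤ k)
    have h2 : ∑ e : C, (if e ∈ UfS S f then wgt p f else 0)
        = ((UfS S f).card : ℝ) * wgt p f := by
      have h' : ∀ e : C, (if e ∈ UfS S f then wgt p f else 0)
          = (if e ∈ UfS S f then (1 : ℝ) else 0) * wgt p f := by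
        intro e; split <;> ring
      simp only [h']
      rw [← Finset.sum_mul, Finset.sum_boole, Finset.filter_univ_mem]
    rw [h2]
    exact mul_le_mul_of_nonneg_right hcard (hw0 f)
  have hchain : 2 * (k : ℝ) * ∑ f ∈ LF, wgt p f
      ≤ 6 / 5 * ((k : ℝ) * ∑ f ∈ KF, wgt p f) := by
    calc 2 * (k : ℝ) * ∑ f ∈ LF, wgt p f ≤ ∑ f ∈ KF, T f * wgt p f := hM
      _ = _ := hre
      _ ≤ _ := h4
      _ ≤ 6 / 5 * ((k : ℝ) * ∑ f ∈ KF, wgt p f) := by linarith [h5]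
  have hk1 : (1 : ℝ) ≤ (k : ℝ) := by exact_mod_cast hk
  nlinarith [hchain, hk1, hQ0]

end core

section meas

variable {Ω : Type*} [MeasurableSpace Ω] (μ : Measure Ω) [IsProbabilityMeasure μ]
  {I : Type*} [Fintype I] (X : I → Ω → ℕ)

lemma cell_eq (f : I → Bool) :
    (fun ω i => decide (X i ω = 1)) ⁻¹' {f}
      = ⋂ i, X i ⁻¹' {n : ℕ | decide (n = 1) = f i} := by
  ext ω
  simp only [Set.mem_preimage, Set.mem_singleton_iff, Set.mem_iInter, funext_iff,
    Set.mem_setOf_eq]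

lemma cell_meas (hmeas : ∀ i, Measurable (X i)) (f : I → Bool) :
    MeasurableSet ((fun ω i => decide (X i ω = 1)) ⁻¹' {f}) := by
  rw [cell_eq]
  exact MeasurableSet.iInter fun i => hmeas i ((Set.to_countable _).measurableSet)

lemma cell_wgt (hmeas : ∀ i, Measurable (X i))
    (hind : iIndepFun X μ)
    (p : I → ℝ) (hp : ∀ i, (μ {ω | X i ω = 1}).toReal = p i) (f : I → Bool) :
    (μ ((fun ω i => decide (X i ω = 1)) ⁻¹' {f})).toReal = wgt p f := by
  classical
  rw [cell_eq]
  have h1 : (⋂ i, X i ⁻¹' {n : ℕ | decide (n = 1) = f i})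
      = ⋂ i ∈ Finset.univ, X i ⁻¹' {n : ℕ | decide (n = 1) = f i} := by
    simp
  rw [h1, hind.measure_inter_preimage_eq_mul Finset.univ
    (fun i _ => (Set.to_countable _).measurableSet), ENNReal.toReal_prod]
  refine Finset.prod_congr rfl fun i _ => ?_
  by_cases hf : f i = true
  · have h2 : X i ⁻¹' {n : ℕ | decide (n = 1) = f i} = {ω | X i ω = 1} := by
      ext ω; simp [hf]
    rw [h2, hp i, hf, if_pos rfl]
  · have hff : f i = false := by simpa using hf
    have hset : X i ⁻¹' {n : ℕ | decide (n = 1) = f i} = {ω | X i ω = 1}ᶜ := by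
      ext ω
      simp only [Set.mem_preimage, Set.mem_setOf_eq, hff, Set.mem_compl_iff,
        decide_eq_false_iff_not]
    have hm1 : MeasurableSet {ω | X i ω = 1} := hmeas i (measurableSet_singleton 1)
    rw [hset, measure_compl hm1 (measure_ne_top μ _), measure_univ,
      ENNReal.toReal_sub_of_le prob_le_one ENNReal.one_ne_top]
    simp [hp i, hff]

lemma finset_event_meas (hmeas : ∀ i, Measurable (X i)) (A : Finset (I → Bool)) :
    MeasurableSet ((fun ω i => decide (X i ω = 1)) ⁻¹' ↑A) := by
  classical
  rw [← Set.biUnion_of_singleton (A : Set (I → Bool)), Set.preimage_iUnion₂]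
  exact MeasurableSet.biUnion A.countable_toSet fun f _ => cell_meas X hmeas f

lemma finset_event_wgt (hmeas : ∀ i, Measurable (X i))
    (hind : iIndepFun X μ)
    (p : I → ℝ) (hp : ∀ i, (μ {ω | X i ω = 1}).toReal = p i) (A : Finset (I → Bool)) :
    (μ ((fun ω i => decide (X i ω = 1)) ⁻¹' ↑A)).toReal = ∑ f ∈ A, wgt p f := by
  classical
  have hun : (fun ω i => decide (X i ω = 1)) ⁻¹' ↑A
      = ⋃ f ∈ A, (fun ω i => decide (X i ω = 1)) ⁻¹' {f} := by
    ext ω; simp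
  rw [hun, measure_biUnion_finset ?_ (fun f _ => cell_meas X hmeas f), ENNReal.toReal_sum
      (fun f _ => measure_ne_top μ _)]
  · exact Finset.sum_congr rfl fun f _ => cell_wgt μ X hmeas hind p hp f
  · intro f _ g _ hfg
    refine Set.disjoint_left.2 fun ω h1 h2 => hfg ?_
    simp only [Set.mem_preimage, Set.mem_singleton_iff] at h1 h2
    rw [← h1, ← h2]

end meas

/-- Independent `{0,1}` random variables `X i` select sets `S i ⊆ C`; `U` is the random
covered set. Assuming `∑ i, p i * min |S i| k ≥ 6 k` and that every element is
fractionally covered to extent at most `1/6`, conditioned on the event `K` that at most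
`k - 1` elements are covered, `Z = (1/k) ∑ i, X i * min |S i| k` is smaller than `2`
with probability at least `2/5`. -/
theorem stmt2 {Ω : Type*} [MeasurableSpace Ω] (μ : Measure Ω) [IsProbabilityMeasure μ]
    {I : Type*} [Fintype I] {C : Type*} [Fintype C] [DecidableEq C]
    (S : I → Finset C) (k : ℕ) (hk : 1 ≤ k)
    (p : I → ℝ) (hp01 : ∀ i, p i ∈ Set.Icc (0 : ℝ) 1)
    (X : I → Ω → ℕ) (hmeas : ∀ i, Measurable (X i))
    (h01 : ∀ i ω, X i ω = 0 ∨ X i ω = 1)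
    (hind : iIndepFun X μ)
    (hp : ∀ i, (μ {ω | X i ω = 1}).toReal = p i)
    (hH1 : (6 * k : ℝ) ≤ ∑ i, p i * min ((S i).card : ℝ) (k : ℝ))
    (hH2 : ∀ e : C, ∑ i ∈ Finset.univ.filter (fun i => e ∈ S i), p i ≤ 1 / 6)
    (U : Ω → Finset C)
    (hU : ∀ ω, U ω = Finset.univ.biUnion fun i => if X i ω = 1 then S i else ∅)
    (Z : Ω → ℝ)
    (hZ : ∀ ω, Z ω = (1 / (k : ℝ)) * ∑ i, (X i ω : ℝ) * min ((S i).card : ℝ) (k : ℝ))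
    (K : Set Ω) (hK : K = {ω | (U ω).card ≤ k - 1})
    (hpos : 0 < μ K) :
    (2 : ENNReal) / 5 ≤ (μ[|K]) {ω | Z ω < 2} := by
  classical
  have hp01' : ∀ i, 0 ≤ p i ∧ p i ≤ 1 := fun i => ⟨(hp01 i).1, (hp01 i).2⟩
  set Yb : Ω → I → Bool := fun ω i => decide (X i ω = 1) with hYb
  have hk0 : (0 : ℝ) < (k : ℝ) := by exact_mod_cast hk
  -- U in terms of Yb
  have hYU : ∀ ω, U ω = UfS S (Yb ω) := by
    intro ω
    rw [hU ω]
    unfold UfS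
    refine Finset.biUnion_congr rfl fun i _ => ?_
    by_cases h : X i ω = 1 <;> simp [h, hYb]
  -- Z in terms of Yb
  set T : (I → Bool) → ℝ := fun f => ∑ i, if f i then ((min (S i).card k : ℕ) : ℝ) else 0
    with hT
  have hYZ : ∀ ω, Z ω = (1 / (k : ℝ)) * T (Yb ω) := by
    intro ω
    rw [hZ ω, hT]
    congr 1
    refine Finset.sum_congr rfl fun i _ => ?_
    rcases h01 i ω with h | h
    · simp [h, hYb]
    · have hyb : Yb ω i = true := by simp [hYb, h]
      rw [hyb, if_pos rfl, h]
      push_cast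
      ring
  -- the events as finsets of configurations
  set KA : Finset (I → Bool) := univ.filter (fun f : I → Bool => (UfS S f).card ≤ k - 1)
    with hKA
  set LA : Finset (I → Bool) := univ.filter (fun f : I → Bool =>
      (UfS S f).card ≤ k - 1 ∧ (2 * k : ℝ) ≤ T f) with hLA
  set MA : Finset (I → Bool) := univ.filter (fun f : I → Bool =>
      (UfS S f).card ≤ k - 1 ∧ ¬ ((2 * k : ℝ) ≤ T f)) with hMA
  have hmemKA : ∀ f : I → Bool, f ∈ KA ↔ (UfS S f).card ≤ k - 1 := by
    intro f; rw [hKA, Finset.mem_filter]; simp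
  have hmemMA : ∀ f : I → Bool, f ∈ MA ↔ ((UfS S f).card ≤ k - 1 ∧ ¬ ((2 * k : ℝ) ≤ T f)) := by
    intro f; rw [hMA, Finset.mem_filter]; simp
  have hKev : K = Yb ⁻¹' ↑KA := by
    rw [hK]
    ext ω
    rw [Set.mem_preimage, Finset.mem_coe, hmemKA, Set.mem_setOf_eq, hYU ω]
  have hZiff : ∀ ω, (Z ω < 2 ↔ ¬ ((2 * k : ℝ) ≤ T (Yb ω))) := by
    intro ω
    rw [hYZ ω, not_le, div_mul_eq_mul_div, one_mul, div_lt_iff₀ hk0]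
  have hMev : K ∩ {ω | Z ω < 2} = Yb ⁻¹' ↑MA := by
    rw [hK]
    ext ω
    rw [Set.mem_inter_iff, Set.mem_preimage, Finset.mem_coe, hmemMA, Set.mem_setOf_eq,
      Set.mem_setOf_eq, hYU ω, hZiff ω]
  -- measurability of K
  have hKm : MeasurableSet K := by
    rw [hKev]; exact finset_event_meas X hmeas KA
  -- core bound
  have hcore := core_bound S k hk p hp01' hH2
  have hsplit : ∑ f ∈ KA, wgt p f = ∑ f ∈ LA, wgt p f + ∑ f ∈ MA, wgt p f := by
    rw [hKA, hLA, hMA]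
    rw [← Finset.sum_filter_add_sum_filter_not
      (univ.filter (fun f : I → Bool => (UfS S f).card ≤ k - 1))
      (fun f => (2 * k : ℝ) ≤ T f)]
    rw [Finset.filter_filter, Finset.filter_filter]
  -- measure identifications
  have hKval : (μ K).toReal = ∑ f ∈ KA, wgt p f := by
    rw [hKev]; exact finset_event_wgt μ X hmeas hind p hp KA
  have hMval : (μ (K ∩ {ω | Z ω < 2})).toReal = ∑ f ∈ MA, wgt p f := by
    rw [hMev]; exact finset_event_wgt μ X hmeas hind p hp MA
  -- real inequality
  have hreal : 2 / 5 * (μ K).toReal ≤ (μ (K ∩ {ω | Z ω < 2})).toReal := by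
    rw [hKval, hMval]
    have hLcore : ∑ f ∈ LA, wgt p f ≤ 3 / 5 * ∑ f ∈ KA, wgt p f := hcore
    linarith [hsplit]
  -- back to ENNReal
  have hKne : μ K ≠ ⊤ := measure_ne_top μ K
  have hMne : μ (K ∩ {ω | Z ω < 2}) ≠ ⊤ := measure_ne_top μ _
  have hENN : (2 : ENNReal) / 5 * μ K ≤ μ (K ∩ {ω | Z ω < 2}) := by
    have h25 : (2 : ENNReal) / 5 * μ K ≠ ⊤ :=
      ENNReal.mul_ne_top
        (by rw [ENNReal.div_eq_inv_mul]
            exact ENNReal.mul_ne_top (ENNReal.inv_ne_top.2 (by norm_num)) ENNReal.ofNat_ne_top)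
        hKne
    rw [← ENNReal.toReal_le_toReal h25 hMne]
    rw [ENNReal.toReal_mul, ENNReal.toReal_div]
    simpa using hreal
  rw [ProbabilityTheory.cond_apply hKm μ]
  calc (2 : ENNReal) / 5 = (2 / 5) * (μ K * (μ K)⁻¹) := by
        rw [ENNReal.mul_inv_cancel hpos.ne' hKne, mul_one]
    _ = ((2 / 5) * μ K) * (μ K)⁻¹ := by rw [mul_assoc]
    _ ≤ μ (K ∩ {ω | Z ω < 2}) * (μ K)⁻¹ := mul_le_mul_left hENN _
    _ = (μ K)⁻¹ * μ (K ∩ {ω | Z ω < 2}) := mul_comm _ _
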